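/- Let φ: M → N be a surjective degree-0 map of finitely generated graded modules over R = ℂ[x₀,…,xₘ] whose kernel K satisfies K_j = 0 for all j ≤ 1. Then for every p ≥ 0 the induced map Tor^R_p(M, ℂ)_{p+1} → Tor^R_p(N, ℂ)_{p+1} on the degree-(p+1) graded pieces is injective; in particular b_{p,1}(M) ≤ b_{p,1}(N) for all p. -/

import Mathlib

/-!
STATEMENT 9: let `φ : M → N` be a surjective degree-`0` map of finitely generated graded
modules over `R = ℂ[x₀,…,xₘ]` whose kernel `K` satisfies `K_j = 0` for all `j ≤ 1`.
Then for every `p ≥ 0` the induced map `Tor^R_p(M, ℂ)_{p+1} → Tor^R_p(N, ℂ)_{p+1}` is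
injective; in particular `b_{p,1}(M) ≤ b_{p,1}(N)`.

Following the paper, `Tor^R_p(M, ℂ)_{p+q}` is realised as the degree-`(p+q)` graded
piece of the `p`-th homology of `M ⊗_R K_•(x₀,…,xₘ)`, i.e. as the homology at position
`p` of the degree-`(p+q)` strand of the Koszul complex on the variables (whose `p`-th
term is `⋀^p V ⊗ M_q`, functions from `p`-element subsets of `{0,…,m}` to the graded
piece, with the Koszul differential); the induced map on `Tor` is the map induced on
homology by the chain map between these strands induced by `φ`.  A grading on a module
is a compatible internal direct sum decomposition into `ℂ`-subspaces indexed by `ℤ`.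
-/

open MvPolynomial

noncomputable section

/-- The polynomial ring `ℂ[x₀,…,xₘ]`. -/
abbrev PolyRing (m : ℕ) : Type := MvPolynomial (Fin (m + 1)) ℂ

variable {m : ℕ} {M : Type} [AddCommGroup M] [Module ℂ M] [Module (PolyRing m) M]
  [IsScalarTower ℂ (PolyRing m) M]

noncomputable def gradedSmul (ℳ : ℤ → Submodule ℂ M) (a : PolyRing m) (j : ℤ)
    (ha : ∀ x ∈ ℳ j, a • x ∈ ℳ (j + 1)) : ℳ j →ₗ[ℂ] ℳ (j + 1) where
  toFun x := ⟨a • (x : M), ha x x.2⟩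
  map_add' x y := Subtype.ext (by simp [smul_add])
  map_smul' c x := Subtype.ext (by
    show a • (c • (x : M)) = c • (a • (x : M))
    exact smul_comm a c (x : M))

@[simp] lemma gradedSmul_coe (ℳ : ℤ → Submodule ℂ M) (a : PolyRing m) (j : ℤ)
    (ha : ∀ x ∈ ℳ j, a • x ∈ ℳ (j + 1)) (y : ℳ j) :
    ((gradedSmul ℳ a j ha y : ℳ (j + 1)) : M) = a • (y : M) := rfl

noncomputable def strandMap (ℳ : ℤ → Submodule ℂ M) {r : ℕ} (f : Fin r → PolyRing m)
    (hf : ∀ (i : Fin r) (j : ℤ), ∀ x ∈ ℳ j, f i • x ∈ ℳ (j + 1)) (t : ℤ) (p : ℕ) :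
    ({S : Finset (Fin r) // S.card = p + 1} → ℳ (t - ((p + 1 : ℕ) : ℤ))) →ₗ[ℂ]
      ({S : Finset (Fin r) // S.card = p} → ℳ (t - (p : ℤ))) :=
  LinearMap.pi fun T => ∑ i : Fin r,
    if h : i ∈ T.1 then 0
    else ((-1 : ℂ) ^ (T.1.filter (· < i)).card) •
      ((LinearEquiv.ofEq _ _ (congrArg ℳ (by push_cast; ring))).toLinearMap.comp
        ((gradedSmul ℳ (f i) (t - ((p + 1 : ℕ) : ℤ)) (hf i (t - ((p + 1 : ℕ) : ℤ)))).comp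
          (LinearMap.proj (R := ℂ)
            (⟨insert i T.1, by rw [Finset.card_insert_of_notMem h, T.2]⟩ :
              {S : Finset (Fin r) // S.card = p + 1}))))

lemma strandMap_apply_coe (ℳ : ℤ → Submodule ℂ M) {r : ℕ} (f : Fin r → PolyRing m)
    (hf : ∀ (i : Fin r) (j : ℤ), ∀ x ∈ ℳ j, f i • x ∈ ℳ (j + 1)) (t : ℤ) (p : ℕ)
    (x : {S : Finset (Fin r) // S.card = p + 1} → ℳ (t - ((p + 1 : ℕ) : ℤ)))
    (T : {S : Finset (Fin r) // S.card = p}) :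
    ((strandMap ℳ f hf t p x T : ℳ (t - (p : ℤ))) : M)
      = ∑ i : Fin r,
          if h : i ∈ T.1 then 0
          else ((-1 : ℂ) ^ (T.1.filter (· < i)).card) • (f i •
            ((x ⟨insert i T.1, by rw [Finset.card_insert_of_notMem h, T.2]⟩ :
              ℳ (t - ((p + 1 : ℕ) : ℤ))) : M)) := by
  simp only [strandMap, LinearMap.pi_apply, LinearMap.sum_apply]
  rw [Submodule.coe_sum]
  refine Finset.sum_congr rfl fun i _ => ?_
  by_cases h : i ∈ T.1
  · simp [h]
  · simp [h]

lemma filter_card_insert {r : ℕ} (i j : Fin r) (S : Finset (Fin r)) (h : i ∉ S) :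
    ((insert i S).filter (· < j)).card
      = (S.filter (· < j)).card + if i < j then 1 else 0 := by
  rw [Finset.filter_insert]
  split_ifs with hij
  · rw [Finset.card_insert_of_notMem (fun hc => h (Finset.mem_filter.1 hc).1)]
  · omega

lemma strandMap_comp_strandMap (ℳ : ℤ → Submodule ℂ M) {r : ℕ} (f : Fin r → PolyRing m)
    (hf : ∀ (i : Fin r) (j : ℤ), ∀ x ∈ ℳ j, f i • x ∈ ℳ (j + 1)) (t : ℤ) (p : ℕ) :
    (strandMap ℳ f hf t p).comp (strandMap ℳ f hf t (p + 1)) = 0 := by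
  apply LinearMap.ext; intro x
  funext T
  simp only [LinearMap.comp_apply, LinearMap.zero_apply, Pi.zero_apply]
  apply Subtype.ext
  rw [strandMap_apply_coe]
  set F : Fin r × Fin r → M := fun P =>
    if h1 : P.1 ∈ T.1 then 0
    else if h2 : P.2 ∈ insert P.1 T.1 then 0
    else (((-1 : ℂ) ^ (T.1.filter (· < P.1)).card) *
          ((-1 : ℂ) ^ ((insert P.1 T.1).filter (· < P.2)).card)) •
        ((f P.1 * f P.2) •
          ((x ⟨insert P.2 (insert P.1 T.1), by
            rw [Finset.card_insert_of_notMem h2, Finset.card_insert_of_notMem h1, T.2]⟩ :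
            ℳ (t - ((p + 1 + 1 : ℕ) : ℤ))) : M))
    with hF
  have step1 : (∑ i : Fin r,
      if h : i ∈ T.1 then 0
      else ((-1 : ℂ) ^ (T.1.filter (· < i)).card) • (f i •
        (((strandMap ℳ f hf t (p + 1)) x
          ⟨insert i T.1, by rw [Finset.card_insert_of_notMem h, T.2]⟩ :
            ℳ (t - ((p + 1 : ℕ) : ℤ))) : M)))
      = ∑ i : Fin r, ∑ j : Fin r, F (i, j) := by
    refine Finset.sum_congr rfl fun i _ => ?_
    by_cases h1 : i ∈ T.1
    · rw [dif_pos h1]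
      refine (Finset.sum_eq_zero fun j _ => ?_).symm
      rw [hF]; dsimp only; rw [dif_pos h1]
    · rw [dif_neg h1, strandMap_apply_coe, Finset.smul_sum, Finset.smul_sum]
      refine Finset.sum_congr rfl fun j _ => ?_
      by_cases h2 : j ∈ insert i T.1
      · rw [dif_pos h2, smul_zero, smul_zero, hF]
        dsimp only
        rw [dif_neg h1, dif_pos h2]
      · rw [dif_neg h2, hF]
        dsimp only
        rw [dif_neg h1, dif_neg h2]
        rw [smul_comm (f i), smul_smul, smul_smul (f i)]
  rw [step1, ← Fintype.sum_prod_type]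
  refine Finset.sum_ninvolution Prod.swap ?_ ?_ (fun _ => Finset.mem_univ _)
    (fun P => Prod.swap_swap P)
  · rintro ⟨i, j⟩
    simp only [hF, Prod.swap_prod_mk]
    by_cases h1 : i ∈ T.1
    · rw [dif_pos h1]
      by_cases h1' : j ∈ T.1
      · rw [dif_pos h1']; simp
      · rw [dif_neg h1', dif_pos (Finset.mem_insert_of_mem h1)]; simp
    · rw [dif_neg h1]
      by_cases h2 : j ∈ insert i T.1
      · rw [dif_pos h2]
        rcases Finset.mem_insert.1 h2 with rfl | hjT
        · rw [dif_neg h1, dif_pos (Finset.mem_insert_self _ _)]; simp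
        · rw [dif_pos hjT]; simp
      · have h1' : j ∉ T.1 := fun hc => h2 (Finset.mem_insert_of_mem hc)
        have hij : i ≠ j := fun hc => h2 (hc ▸ Finset.mem_insert_self _ _)
        have h2' : i ∉ insert j T.1 := by
          simp only [Finset.mem_insert]
          rintro (rfl | hc)
          exacts [hij rfl, h1 hc]
        rw [dif_neg h2, dif_neg h1', dif_neg h2']
        have hxeq : ((x ⟨insert j (insert i T.1), by
              rw [Finset.card_insert_of_notMem h2, Finset.card_insert_of_notMem h1, T.2]⟩ :
              ℳ (t - ((p + 1 + 1 : ℕ) : ℤ))) : M)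
            = ((x ⟨insert i (insert j T.1), by
              rw [Finset.card_insert_of_notMem h2', Finset.card_insert_of_notMem h1', T.2]⟩ :
              ℳ (t - ((p + 1 + 1 : ℕ) : ℤ))) : M) := by
          congr 2
          exact Subtype.ext (Finset.insert_comm _ _ _)
        rw [hxeq, mul_comm (f j) (f i), ← add_smul]
        convert zero_smul ℂ _
        rw [filter_card_insert i j T.1 h1, filter_card_insert j i T.1 h1']
        rcases hij.lt_or_gt with hlt | hlt
        · rw [if_pos hlt, if_neg (asymm hlt), pow_add, pow_add]
          ring
        · rw [if_neg (asymm hlt), if_pos hlt, pow_add, pow_add]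
          ring
  · rintro ⟨i, j⟩ hne hc
    apply hne
    have hji : j = i := (Prod.ext_iff.1 hc).1
    subst hji
    rw [hF]
    dsimp only
    by_cases h1 : j ∈ T.1
    · rw [dif_pos h1]
    · rw [dif_neg h1, dif_pos (Finset.mem_insert_self _ _)]


noncomputable def strandComplex (ℳ : ℤ → Submodule ℂ M) {r : ℕ} (f : Fin r → PolyRing m)
    (hf : ∀ (i : Fin r) (j : ℤ), ∀ x ∈ ℳ j, f i • x ∈ ℳ (j + 1)) (t : ℤ) :
    ChainComplex (ModuleCat ℂ) ℕ :=
  ChainComplex.of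
    (fun p => ModuleCat.of ℂ ({S : Finset (Fin r) // S.card = p} → ℳ (t - (p : ℤ))))
    (fun p => ModuleCat.ofHom (strandMap ℳ f hf t p))
    (fun p => ModuleCat.hom_ext (by
      simp only [ModuleCat.hom_comp, ModuleCat.hom_ofHom, ModuleCat.hom_zero]
      exact strandMap_comp_strandMap ℳ f hf t p))

/-- The Betti number `b_{p,q}`, as the `ℂ`-dimension of the degree-`(p+q)` graded piece
of the `p`-th homology of `M ⊗_R K_•(x₀,…,xₘ)`, i.e. of the middle cohomology of
`⋀^{p+1}V ⊗ M_{q−1} → ⋀^p V ⊗ M_q → ⋀^{p−1}V ⊗ M_{q+1}` (Koszul differentials). -/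
noncomputable def koszulBetti (ℳ : ℤ → Submodule ℂ M)
    (hℳ : ∀ (i : Fin (m + 1)) (j : ℤ), ∀ x ∈ ℳ j,
      (MvPolynomial.X i : PolyRing m) • x ∈ ℳ (j + 1)) (p : ℕ) (q : ℤ) : ℕ :=
  Module.finrank ℂ
    ((strandComplex ℳ (MvPolynomial.X : Fin (m + 1) → PolyRing m) hℳ (p + q)).homology p)

variable {N : Type} [AddCommGroup N] [Module ℂ N] [Module (PolyRing m) N]
  [IsScalarTower ℂ (PolyRing m) N]

/-- The chain map between degree-`t` Koszul strands induced by a degree-`0`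
`R`-linear map `φ : M → N`. -/
noncomputable def strandChainMap (ℳ : ℤ → Submodule ℂ M) (𝒩 : ℤ → Submodule ℂ N)
    {r : ℕ} (f : Fin r → PolyRing m)
    (hfM : ∀ (i : Fin r) (j : ℤ), ∀ x ∈ ℳ j, f i • x ∈ ℳ (j + 1))
    (hfN : ∀ (i : Fin r) (j : ℤ), ∀ x ∈ 𝒩 j, f i • x ∈ 𝒩 (j + 1))
    (φ : M →ₗ[PolyRing m] N) (hφ : ∀ (j : ℤ), ∀ x ∈ ℳ j, φ x ∈ 𝒩 j) (t : ℤ) :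
    strandComplex ℳ f hfM t ⟶ strandComplex 𝒩 f hfN t where
  f p := ModuleCat.ofHom (((φ.restrictScalars ℂ).restrict (q := 𝒩 (t - (p : ℤ)))
    (hφ (t - (p : ℤ)))).compLeft {S : Finset (Fin r) // S.card = p})
  comm' := by
    rintro i j hij
    obtain rfl : j + 1 = i := hij
    simp only [strandComplex, ChainComplex.of_d]
    apply ModuleCat.hom_ext
    apply LinearMap.ext; intro x
    funext T
    apply Subtype.ext
    show ((strandMap 𝒩 f hfN t j (((φ.restrictScalars ℂ).restrict
        (hφ (t - ((j + 1 : ℕ) : ℤ)))).compLeft _ x) T : 𝒩 (t - (j : ℤ))) : N)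
      = (((φ.restrictScalars ℂ).restrict (hφ (t - (j : ℤ))))
          ((strandMap ℳ f hfM t j x) T) : N)
    rw [strandMap_apply_coe]
    have hres : ∀ (jj : ℤ) (y : ℳ jj),
        (((φ.restrictScalars ℂ).restrict (hφ jj)) y : N) = φ (y : M) := fun _ _ => rfl
    rw [hres, strandMap_apply_coe, map_sum]
    refine Finset.sum_congr rfl fun i _ => ?_
    by_cases h : i ∈ T.1
    · rw [dif_pos h, dif_pos h, map_zero]
    · rw [dif_neg h, dif_neg h, LinearMap.map_smul_of_tower, LinearMap.map_smul]
      rfl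

set_option maxHeartbeats 1000000
set_option synthInstance.maxHeartbeats 400000
set_option linter.unusedSectionVars false

section Helpers

variable {P : Type} [AddCommGroup P] [Module ℂ P] [Module (PolyRing m) P]
  [IsScalarTower ℂ (PolyRing m) P]

/-- Projection onto a graded piece. -/
noncomputable def gradedProj (𝒜 : ℤ → Submodule ℂ P) (h : DirectSum.IsInternal 𝒜) (j : ℤ) :
    P →ₗ[ℂ] 𝒜 j :=
  (DirectSum.component ℂ ℤ (fun i => ↥(𝒜 i)) j).comp
    (LinearEquiv.ofBijective (DirectSum.coeLinearMap 𝒜) h).symm.toLinearMap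

lemma gradedProj_apply (𝒜 : ℤ → Submodule ℂ P) (h : DirectSum.IsInternal 𝒜) (j : ℤ) (x : P) :
    gradedProj 𝒜 h j x
      = (LinearEquiv.ofBijective (DirectSum.coeLinearMap 𝒜) h).symm x j := rfl

lemma gradedProj_of_mem (𝒜 : ℤ → Submodule ℂ P) (h : DirectSum.IsInternal 𝒜) {j : ℤ}
    {x : P} (hx : x ∈ 𝒜 j) : gradedProj 𝒜 h j x = ⟨x, hx⟩ := by
  rw [gradedProj_apply]
  exact h.ofBijective_coeLinearMap_of_mem hx

lemma gradedProj_of_mem_ne (𝒜 : ℤ → Submodule ℂ P) (h : DirectSum.IsInternal 𝒜) {i j : ℤ}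
    (hij : i ≠ j) {x : P} (hx : x ∈ 𝒜 i) : gradedProj 𝒜 h j x = 0 := by
  rw [gradedProj_apply]
  exact h.ofBijective_coeLinearMap_of_mem_ne hij hx

lemma graded_induction (𝒜 : ℤ → Submodule ℂ P) (h : DirectSum.IsInternal 𝒜)
    (Q : P → Prop) (h0 : Q 0) (hhom : ∀ (j : ℤ) (x : P), x ∈ 𝒜 j → Q x)
    (hadd : ∀ a b, Q a → Q b → Q (a + b)) : ∀ x, Q x := by
  intro x
  obtain ⟨c, rfl⟩ := h.surjective x
  induction c using DirectSum.induction_on with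
  | zero => simpa using h0
  | of i y => rw [DirectSum.coeAddMonoidHom_of]; exact hhom i y y.2
  | add a b ha hb => rw [map_add]; exact hadd _ _ ha hb


lemma monomial_smul_mem (𝒜 : ℤ → Submodule ℂ P)
    (hX : ∀ (i : Fin (m + 1)) (j : ℤ), ∀ x ∈ 𝒜 j, (MvPolynomial.X i : PolyRing m) • x ∈ 𝒜 (j + 1)) :
    ∀ (k : ℕ) (α : Fin (m + 1) →₀ ℕ), (α.sum fun _ e => e) = k →
      ∀ (d : ℤ) (x : P), x ∈ 𝒜 d →
        (MvPolynomial.monomial α (1 : ℂ) : PolyRing m) • x ∈ 𝒜 (d + k) := by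
  intro k
  induction k with
  | zero =>
    intro α hα d x hx
    have h0 : α = 0 := by
      ext i
      simp only [Finsupp.coe_zero, Pi.zero_apply]
      by_contra hi
      have hmem : i ∈ α.support := Finsupp.mem_support_iff.2 hi
      have : α i ≤ α.sum fun _ e => e :=
        Finset.single_le_sum (f := fun i => α i) (fun _ _ => Nat.zero_le _) hmem
      omega
    subst h0
    have : (MvPolynomial.monomial (0 : Fin (m+1) →₀ ℕ) (1 : ℂ) : PolyRing m) = 1 := by
      simp [MvPolynomial.monomial_zero']
    rw [this, one_smul]
    simpa using hx
  | succ n ih =>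
    intro α hα d x hx
    have hne : α ≠ 0 := by
      rintro rfl
      simp at hα
    obtain ⟨i, hi⟩ := Finsupp.support_nonempty_iff.2 hne
    have hi' : α i ≠ 0 := Finsupp.mem_support_iff.1 hi
    set β := α - Finsupp.single i 1 with hβ
    have hαβ : α = Finsupp.single i 1 + β := by
      ext t
      simp only [Finsupp.coe_add, Finsupp.coe_tsub, Pi.add_apply, Pi.sub_apply, hβ]
      rcases eq_or_ne t i with rfl | ht
      · simp only [Finsupp.single_eq_same]; omega
      · simp only [Finsupp.single_eq_of_ne ht]; omega
    have hβsum : (β.sum fun _ e => e) = n := by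
      have := Finsupp.sum_add_index' (f := Finsupp.single i 1) (g := β)
        (h := fun (_ : Fin (m+1)) (e : ℕ) => e) (fun _ => rfl) (fun _ _ _ => rfl)
      rw [← hαβ] at this
      rw [hα] at this
      simp only [Finsupp.sum_single_index] at this
      omega
    have hmono : (MvPolynomial.monomial α (1 : ℂ) : PolyRing m)
        = (MvPolynomial.X i : PolyRing m) * MvPolynomial.monomial β 1 := by
      rw [MvPolynomial.X, MvPolynomial.monomial_mul, one_mul, ← hαβ]
    rw [hmono, mul_smul]
    have := hX i (d + n) _ (ih β hβsum d x hx)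
    have heq : (d + n) + 1 = d + ((n + 1 : ℕ) : ℤ) := by push_cast; ring
    rwa [heq] at this

lemma gradedProj_monomial_smul (𝒜 : ℤ → Submodule ℂ P) (h : DirectSum.IsInternal 𝒜)
    (hX : ∀ (i : Fin (m + 1)) (j : ℤ), ∀ x ∈ 𝒜 j, (MvPolynomial.X i : PolyRing m) • x ∈ 𝒜 (j + 1))
    (α : Fin (m + 1) →₀ ℕ) (j : ℤ) (x : P) :
    ((gradedProj 𝒜 h j ((MvPolynomial.monomial α (1 : ℂ) : PolyRing m) • x)) : P)
      = (MvPolynomial.monomial α (1 : ℂ) : PolyRing m) •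
          ((gradedProj 𝒜 h (j - ((α.sum fun _ e => e : ℕ) : ℤ)) x) : P) := by
  induction x using graded_induction 𝒜 h with
  | h0 => simp
  | hhom d x hx =>
    have hmem : (MvPolynomial.monomial α (1 : ℂ) : PolyRing m) • x
        ∈ 𝒜 (d + (α.sum fun _ e => e)) := monomial_smul_mem 𝒜 hX _ α rfl d x hx
    rcases eq_or_ne (d + ((α.sum fun _ e => e : ℕ) : ℤ)) j with he | he
    · rw [gradedProj_of_mem 𝒜 h (he ▸ hmem)]
      have : d = j - ((α.sum fun _ e => e : ℕ) : ℤ) := by omega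
      rw [gradedProj_of_mem 𝒜 h (this ▸ hx)]
    · rw [gradedProj_of_mem_ne 𝒜 h he hmem]
      have hd : d ≠ j - ((α.sum fun _ e => e : ℕ) : ℤ) := by omega
      rw [gradedProj_of_mem_ne 𝒜 h hd hx]
      simp
  | hadd a b ha hb =>
    rw [smul_add, map_add, Submodule.coe_add, ha, hb, map_add, Submodule.coe_add, smul_add]


lemma finiteDimensional_graded_piece [Module.Finite (PolyRing m) P]
    (𝒜 : ℤ → Submodule ℂ P) (h : DirectSum.IsInternal 𝒜)
    (hX : ∀ (i : Fin (m + 1)) (j : ℤ), ∀ x ∈ 𝒜 j, (MvPolynomial.X i : PolyRing m) • x ∈ 𝒜 (j + 1))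
    (j : ℤ) : FiniteDimensional ℂ (𝒜 j) := by
  classical
  obtain ⟨s, hs⟩ : (⊤ : Submodule (PolyRing m) P).FG := Module.finite_def.mp inferInstance
  set B : P → ℕ := fun n =>
    ((LinearEquiv.ofBijective (DirectSum.coeLinearMap 𝒜) h).symm n).support.sup
      fun d => (j - d).toNat with hB
  have hvanish : ∀ (n : P) (k : ℕ), B n < k → gradedProj 𝒜 h (j - (k : ℤ)) n = 0 := by
    intro n k hk
    rw [gradedProj_apply]
    by_contra hne
    have hmem : (j - (k : ℤ)) ∈
        ((LinearEquiv.ofBijective (DirectSum.coeLinearMap 𝒜) h).symm n).support :=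
      DFinsupp.mem_support_iff.2 hne
    have hle : (j - (j - (k : ℤ))).toNat ≤ B n :=
      Finset.le_sup (f := fun d => (j - d).toNat) hmem
    omega
  set A : P → Set (Fin (m + 1) →₀ ℕ) := fun n => {α | (α.sum fun _ e => e) ≤ B n} with hA
  have hAfin : ∀ n, (A n).Finite := by
    intro n
    have h1 : (Set.pi Set.univ fun _ : Fin (m + 1) => Set.Iic (B n)).Finite :=
      Set.Finite.pi fun _ => Set.finite_Iic _
    have h2 := (h1.preimage
      (Function.Injective.injOn (f := fun (α : Fin (m + 1) →₀ ℕ) => (α : Fin (m + 1) → ℕ))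
        (DFunLike.coe_injective)))
    refine h2.subset ?_
    intro α hα
    intro i _
    simp only [Set.mem_Iic]
    have : α i ≤ α.sum fun _ e => e := by
      by_cases hz : α i = 0
      · omega
      · exact Finset.single_le_sum (f := fun i => α i) (fun _ _ => Nat.zero_le _)
          (Finsupp.mem_support_iff.2 hz)
    exact le_trans this hα
  set G : Set ↥(𝒜 j) := ⋃ n ∈ (s : Set P),
    (fun α => gradedProj 𝒜 h j ((MvPolynomial.monomial α (1 : ℂ) : PolyRing m) • n)) '' (A n)
    with hG
  have hGfin : G.Finite := Set.Finite.biUnion s.finite_toSet fun n _ => (hAfin n).image _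
  set W := Submodule.span ℂ G with hW
  have htop : ∀ x : P, x ∈ Submodule.span (PolyRing m) (s : Set P) := by
    rw [hs]; exact fun _ => trivial
  have key : ∀ x : P, x ∈ Submodule.span (PolyRing m) (s : Set P) →
      ∀ r : PolyRing m, gradedProj 𝒜 h j (r • x) ∈ W := by
    intro x hx
    induction hx using Submodule.span_induction with
    | mem n hn =>
      intro r
      set L : PolyRing m →ₗ[ℂ] ↥(𝒜 j) :=
        { toFun := fun q => gradedProj 𝒜 h j (q • n)
          map_add' := fun a b => by rw [add_smul, map_add]
          map_smul' := fun c a => by rw [smul_assoc, map_smul]; rfl } with hL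
      have hLdef : ∀ q, L q = gradedProj 𝒜 h j (q • n) := fun _ => rfl
      have hq : r ∈ Submodule.span ℂ
          (Set.range (MvPolynomial.basisMonomials (Fin (m + 1)) ℂ)) := by
        rw [Module.Basis.span_eq]; trivial
      rw [← hLdef]
      clear hLdef
      induction hq using Submodule.span_induction with
      | mem q hq =>
        obtain ⟨α, rfl⟩ := hq
        have hbm : (MvPolynomial.basisMonomials (Fin (m + 1)) ℂ) α
            = MvPolynomial.monomial α (1 : ℂ) := by
          rw [MvPolynomial.coe_basisMonomials]
        rw [hbm]
        by_cases hα : (α.sum fun _ e => e) ≤ B n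
        · exact Submodule.subset_span (Set.mem_biUnion hn ⟨α, hα, rfl⟩)
        · have hz : L (MvPolynomial.monomial α (1 : ℂ)) = 0 := by
            have : ((L (MvPolynomial.monomial α (1 : ℂ))) : P) = 0 := by
              show ((gradedProj 𝒜 h j ((MvPolynomial.monomial α (1 : ℂ) : PolyRing m) • n)) : P) = 0
              rw [gradedProj_monomial_smul 𝒜 h hX,
                hvanish n _ (by omega : B n < (α.sum fun _ e => e))]
              simp
            exact Subtype.ext this
          rw [hz]
          exact zero_mem W
      | zero => rw [map_zero]; exact zero_mem W
      | add a b _ _ ha hb => rw [map_add]; exact add_mem ha hb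
      | smul c q _ ih => rw [map_smul]; exact Submodule.smul_mem _ _ ih
    | zero => intro r; rw [smul_zero, map_zero]; exact zero_mem W
    | add a b _ _ ha hb =>
      intro r; rw [smul_add, map_add]; exact add_mem (ha r) (hb r)
    | smul a x _ ih => intro r; rw [← smul_assoc, smul_eq_mul]; exact ih (r * a)
  have hWtop : ∀ y : ↥(𝒜 j), y ∈ W := by
    intro y
    have h1 := key (y : P) (htop _) 1
    rw [one_smul, gradedProj_of_mem 𝒜 h y.2] at h1
    simpa using h1
  have heq : (⊤ : Submodule ℂ ↥(𝒜 j)) = W := le_antisymm (fun y _ => hWtop y) le_top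
  exact ⟨heq ▸ Submodule.fg_def.mpr ⟨G, hGfin, rfl⟩⟩


open CategoryTheory in
lemma moduleCat_homologyπ_eq_zero {S : ShortComplex (ModuleCat ℂ)} (c : S.cycles)
    (hc : S.homologyπ c = 0) : ∃ w, S.toCycles w = c := by
  have h0 : S.moduleCatLeftHomologyData.π (S.moduleCatCyclesIso.hom c) = 0 := by
    have h := congrArg (fun f => f c) (ShortComplex.π_moduleCatCyclesIso_hom S)
    simp only [ModuleCat.comp_apply, Function.comp_apply] at h
    rw [← h, hc, map_zero]
  have hmem : S.moduleCatCyclesIso.hom c ∈ LinearMap.range S.moduleCatToCycles := by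
    exact (Submodule.Quotient.mk_eq_zero _).mp h0
  obtain ⟨w, hw⟩ := hmem
  refine ⟨w, ?_⟩
  have h2 := congrArg (fun f => f w) (ShortComplex.toCycles_moduleCatCyclesIso_hom S)
  simp only [ModuleCat.comp_apply, Function.comp_apply] at h2
  have h3 : S.moduleCatCyclesIso.hom (S.toCycles w) = S.moduleCatCyclesIso.hom c := by
    rw [h2]; exact hw
  exact (ModuleCat.mono_iff_injective S.moduleCatCyclesIso.hom).mp inferInstance h3

open CategoryTheory in
lemma homologyMap_injective_of_surj_inj {S₁ S₂ : ShortComplex (ModuleCat ℂ)}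
    (τ : S₁ ⟶ S₂) (h1 : Function.Surjective τ.τ₁) (h2 : Function.Injective τ.τ₂) :
    Function.Injective (ShortComplex.homologyMap τ) := by
  have hz : ∀ x, ShortComplex.homologyMap τ x = 0 → x = 0 := by
    intro x hx
    obtain ⟨y, rfl⟩ := (ModuleCat.epi_iff_surjective S₁.homologyπ).mp inferInstance x
    have hnat : S₂.homologyπ (ShortComplex.cyclesMap τ y) = 0 := by
      have h := congrArg (fun f => f y) (ShortComplex.homologyπ_naturality τ)
      simp only [ModuleCat.comp_apply, Function.comp_apply] at h
      rw [← h]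
      exact hx
    obtain ⟨w, hw⟩ := moduleCat_homologyπ_eq_zero _ hnat
    obtain ⟨w', rfl⟩ := h1 w
    have hcyc : ShortComplex.cyclesMap τ (S₁.toCycles w') = ShortComplex.cyclesMap τ y := by
      have h := congrArg (fun f => f w') (ShortComplex.toCycles_naturality τ)
      simp only [ModuleCat.comp_apply, Function.comp_apply] at h
      rw [h]
      exact hw
    have hcycinj : Function.Injective (ShortComplex.cyclesMap τ) := by
      intro u v huv
      have h1' := congrArg (fun f => f u) (ShortComplex.cyclesMap_i τ)
      have h2' := congrArg (fun f => f v) (ShortComplex.cyclesMap_i τ)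
      simp only [ModuleCat.comp_apply, Function.comp_apply] at h1' h2'
      apply (ModuleCat.mono_iff_injective S₁.iCycles).mp inferInstance
      apply h2
      rw [← h1', ← h2', huv]
    have heq := hcycinj hcyc
    rw [← heq]
    have h := congrArg (fun f => f w') (S₁.toCycles_comp_homologyπ)
    simp only [ModuleCat.comp_apply, Function.comp_apply] at h
    rw [h]; rfl
  intro a b hab
  have : a - b = 0 := hz _ (by rw [map_sub, hab, sub_self])
  exact sub_eq_zero.mp this

end Helpers

/-- **Injectivity of Tor in the linear strand.**  If `φ : M ↠ N` is a surjective
degree-`0` map of finitely generated graded `R`-modules (`R = ℂ[x₀,…,xₘ]`) whose kernel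
`K` satisfies `K_j = 0` for `j ≤ 1`, then for every `p ≥ 0` the induced map
`Tor^R_p(M, ℂ)_{p+1} → Tor^R_p(N, ℂ)_{p+1}` is injective; in particular
`b_{p,1}(M) ≤ b_{p,1}(N)`. -/
theorem tor_linear_strand_injective (m : ℕ) (M N : Type)
    [AddCommGroup M] [Module ℂ M] [Module (PolyRing m) M] [IsScalarTower ℂ (PolyRing m) M]
    [AddCommGroup N] [Module ℂ N] [Module (PolyRing m) N] [IsScalarTower ℂ (PolyRing m) N]
    [Module.Finite (PolyRing m) M] [Module.Finite (PolyRing m) N]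
    (ℳ : ℤ → Submodule ℂ M) (hMint : DirectSum.IsInternal ℳ)
    (hMX : ∀ (i : Fin (m + 1)) (j : ℤ), ∀ x ∈ ℳ j,
      (MvPolynomial.X i : PolyRing m) • x ∈ ℳ (j + 1))
    (𝒩 : ℤ → Submodule ℂ N) (hNint : DirectSum.IsInternal 𝒩)
    (hNX : ∀ (i : Fin (m + 1)) (j : ℤ), ∀ x ∈ 𝒩 j,
      (MvPolynomial.X i : PolyRing m) • x ∈ 𝒩 (j + 1))
    (φ : M →ₗ[PolyRing m] N) (hφsurj : Function.Surjective φ)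
    (hφgr : ∀ (j : ℤ), ∀ x ∈ ℳ j, φ x ∈ 𝒩 j)
    -- the kernel `K` of `φ` satisfies `K_j = 0` for all `j ≤ 1`
    (hker : ∀ j : ℤ, j ≤ 1 → ∀ x ∈ ℳ j, φ x = 0 → x = 0) :
    ∀ p : ℕ,
      Function.Injective
        (HomologicalComplex.homologyMap
          (strandChainMap ℳ 𝒩 (MvPolynomial.X : Fin (m + 1) → PolyRing m)
            hMX hNX φ hφgr ((p : ℤ) + 1)) p) ∧
      koszulBetti ℳ hMX p 1 ≤ koszulBetti 𝒩 hNX p 1 := by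
  classical
  intro p
  -- naturality of graded projections with respect to `φ`
  have hproj : ∀ (j : ℤ) (x : M),
      ((gradedProj 𝒩 hNint j (φ x)) : N) = φ ((gradedProj ℳ hMint j x) : M) := by
    intro j
    refine graded_induction ℳ hMint _ ?_ ?_ ?_
    · simp
    · intro d x hx
      rcases eq_or_ne d j with rfl | hd
      · rw [gradedProj_of_mem 𝒩 hNint (hφgr d x hx), gradedProj_of_mem ℳ hMint hx]
      · rw [gradedProj_of_mem_ne 𝒩 hNint hd (hφgr d x hx), gradedProj_of_mem_ne ℳ hMint hd hx]
        simp
    · intro a b ha hb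
      simp only [map_add, Submodule.coe_add, ha, hb]
  -- `φ` is surjective on each graded piece
  have hsurj_piece : ∀ (j : ℤ) (y : 𝒩 j),
      ∃ x : ℳ j, ((φ.restrictScalars ℂ).restrict (hφgr j)) x = y := by
    intro j y
    obtain ⟨x, hx⟩ := hφsurj (y : N)
    refine ⟨gradedProj ℳ hMint j x, ?_⟩
    apply Subtype.ext
    show φ ((gradedProj ℳ hMint j x : M)) = (y : N)
    rw [← hproj j x, hx, gradedProj_of_mem 𝒩 hNint y.2]
  -- the components of the chain map are surjective
  have hsurj : ∀ q : ℕ, Function.Surjective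
      ((strandChainMap ℳ 𝒩 (MvPolynomial.X : Fin (m + 1) → PolyRing m)
        hMX hNX φ hφgr ((p : ℤ) + 1)).f q) := by
    intro q g
    choose σ hσ using hsurj_piece (((p : ℤ) + 1) - (q : ℤ))
    exact ⟨fun T => σ (g T), funext fun T => hσ (g T)⟩
  -- the component in degree `p` is injective
  have hinj : Function.Injective
      ((strandChainMap ℳ 𝒩 (MvPolynomial.X : Fin (m + 1) → PolyRing m)
        hMX hNX φ hφgr ((p : ℤ) + 1)).f p) := by
    intro u v huv
    funext T
    apply Subtype.ext
    have h1 : φ ((u T : M)) = φ ((v T : M)) := congrArg Subtype.val (congrFun huv T)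
    have hd : ((p : ℤ) + 1) - (p : ℤ) ≤ 1 := by omega
    have h2 := hker _ hd _ (sub_mem (u T).2 (v T).2) (by rw [map_sub, h1, sub_self])
    exact sub_eq_zero.mp h2
  -- injectivity on homology
  have hmain : Function.Injective
      (HomologicalComplex.homologyMap
        (strandChainMap ℳ 𝒩 (MvPolynomial.X : Fin (m + 1) → PolyRing m)
          hMX hNX φ hφgr ((p : ℤ) + 1)) p) :=
    homologyMap_injective_of_surj_inj
      ((HomologicalComplex.shortComplexFunctor (ModuleCat ℂ) (ComplexShape.down ℕ) p).map
        (strandChainMap ℳ 𝒩 (MvPolynomial.X : Fin (m + 1) → PolyRing m)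
          hMX hNX φ hφgr ((p : ℤ) + 1)))
      (hsurj _) (hinj)
  refine ⟨hmain, ?_⟩
  -- finiteness of the homology of the target complex
  haveI hfinN : ∀ j : ℤ, FiniteDimensional ℂ (𝒩 j) :=
    fun j => finiteDimensional_graded_piece 𝒩 hNint hNX j
  haveI i1 : Module.Finite ℂ
      (((strandComplex 𝒩 (MvPolynomial.X : Fin (m + 1) → PolyRing m) hNX
        ((p : ℤ) + 1)).sc p).X₂) :=
    inferInstanceAs (Module.Finite ℂ
      ({S : Finset (Fin (m + 1)) // S.card = p} → 𝒩 (((p : ℤ) + 1) - (p : ℤ))))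
  haveI i2 : Module.Finite ℂ
      ((((strandComplex 𝒩 (MvPolynomial.X : Fin (m + 1) → PolyRing m) hNX
        ((p : ℤ) + 1)).sc p)).moduleCatLeftHomologyData.H) := by
    have hker' : FiniteDimensional ℂ
        (LinearMap.ker (((strandComplex 𝒩 (MvPolynomial.X : Fin (m + 1) → PolyRing m) hNX
          ((p : ℤ) + 1)).sc p)).g.hom) := inferInstance
    exact inferInstanceAs (Module.Finite ℂ
      (LinearMap.ker (((strandComplex 𝒩 (MvPolynomial.X : Fin (m + 1) → PolyRing m) hNX
          ((p : ℤ) + 1)).sc p)).g.hom ⧸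
        LinearMap.range (((strandComplex 𝒩 (MvPolynomial.X : Fin (m + 1) → PolyRing m) hNX
          ((p : ℤ) + 1)).sc p)).moduleCatToCycles))
  haveI i3 : Module.Finite ℂ
      ((strandComplex 𝒩 (MvPolynomial.X : Fin (m + 1) → PolyRing m) hNX
        ((p : ℤ) + 1)).homology p) :=
    Module.Finite.equiv
      (((strandComplex 𝒩 (MvPolynomial.X : Fin (m + 1) → PolyRing m) hNX
        ((p : ℤ) + 1)).sc p).moduleCatHomologyIso.toLinearEquiv).symm
  exact LinearMap.finrank_le_finrank_of_injective
    (f := (HomologicalComplex.homologyMap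
      (strandChainMap ℳ 𝒩 (MvPolynomial.X : Fin (m + 1) → PolyRing m)
        hMX hNX φ hφgr ((p : ℤ) + 1)) p).hom) hmain

end
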